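/- Let (X,d) be a complete metric space and f : X → [0,∞) continuous. Then for any x₀ ∈ X and ε₀ > 0 there exist x ∈ closure(B_{2ε₀}(x₀)) and ε ∈ (0, ε₀] such that f(x)·ε ≥ f(x₀)·ε₀ and f(y) ≤ 2f(x) for all y in the closed ball of radius ε around x. -/

import Mathlib

open Topology Filter Finset Metric

/-- Hofer's lemma: Let (X,d) be a complete metric space and
f : X → [0,∞) continuous.  Then for any x₀ ∈ X and ε₀ > 0 there exist
x ∈ closure(B_{2ε₀}(x₀)) and ε ∈ (0, ε₀] such that f(x)·ε ≥ f(x₀)·ε₀ and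
f(y) ≤ 2 f(x) for all y in the closed ball of radius ε around x. -/
theorem stmt9 {X : Type*} [MetricSpace X] [CompleteSpace X]
    (f : X → ℝ) (hf : Continuous f) (hnonneg : ∀ x, 0 ≤ f x)
    (x₀ : X) (ε₀ : ℝ) (hε₀ : 0 < ε₀) :
    ∃ x ∈ closure (Metric.ball x₀ (2 * ε₀)), ∃ ε : ℝ, ε ∈ Set.Ioc 0 ε₀ ∧
      f x₀ * ε₀ ≤ f x * ε ∧ ∀ y ∈ Metric.closedBall x ε, f y ≤ 2 * f x := by
  by_contra H
  have reformulation : ∀ (x') (k : ℕ), f x₀ * ε₀ ≤ f x' * (ε₀ / 2 ^ k) ↔ 2 ^ k * f x₀ ≤ f x' := by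
    intro x' k
    rw [show f x' * (ε₀ / 2 ^ k) = f x' * ε₀ / 2 ^ k by ring, le_div_iff₀ (by positivity)]
    constructor <;> intro h <;> nlinarith [hε₀]
  push_neg at H
  replace H : ∀ k : ℕ, ∀ x', dist x' x₀ < 2 * ε₀ ∧ 2 ^ k * f x₀ ≤ f x' →
      ∃ y, dist x' y ≤ ε₀ / 2 ^ k ∧ 2 * f x' < f y := by
    intro k x' hx'
    have hmem : x' ∈ closure (Metric.ball x₀ (2 * ε₀)) :=
      subset_closure (Metric.mem_ball.mpr hx'.1)
    have := H x' hmem (ε₀ / 2 ^ k)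
      ⟨by positivity, div_le_self hε₀.le <| one_le_pow₀ one_le_two⟩
      ((reformulation x' k).mpr hx'.2)
    obtain ⟨y, hy, hy2⟩ := this
    exact ⟨y, by rwa [dist_comm, ← Metric.mem_closedBall], hy2⟩
  haveI : Nonempty X := ⟨x₀⟩
  choose! F hF using H
  let u : ℕ → X := fun n => Nat.recOn n x₀ F
  have hu :
    ∀ n,
      dist (u n) x₀ < 2 * ε₀ ∧ 2 ^ n * f x₀ ≤ f (u n) →
        dist (u n) (u <| n + 1) ≤ ε₀ / 2 ^ n ∧ 2 * f (u n) < f (u <| n + 1) :=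
    fun n ↦ hF n (u n)
  have key : ∀ n, dist (u n) (u (n + 1)) ≤ ε₀ / 2 ^ n ∧ 2 * f (u n) < f (u (n + 1)) := by
    intro n
    induction n using Nat.case_strong_induction_on with
    | hz => simpa [u, hε₀] using hu 0
    | hi n IH =>
      have A : dist (u (n + 1)) x₀ < 2 * ε₀ := by
        rw [dist_comm]
        let r := range (n + 1)
        calc
          dist (u 0) (u (n + 1)) ≤ ∑ i ∈ r, dist (u i) (u <| i + 1) :=
            dist_le_range_sum_dist u (n + 1)
          _ ≤ ∑ i ∈ r, ε₀ / 2 ^ i :=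
            (sum_le_sum fun i i_in => (IH i <| Nat.lt_succ_iff.mp <| Finset.mem_range.mp i_in).1)
          _ = (∑ i ∈ r, (1 / 2 : ℝ) ^ i) * ε₀ := by
            rw [Finset.sum_mul]
            field_simp
            simp only [one_div, inv_pow, div_eq_mul_inv, one_mul]
          _ < 2 * ε₀ := by
            apply mul_lt_mul_of_pos_right _ hε₀
            have := geom_sum_eq (by norm_num : (1/2 : ℝ) ≠ 1) (n + 1)
            rw [this]
            have h2 : (0:ℝ) < (1/2:ℝ)^(n+1) := by positivity
            rw [div_lt_iff_of_neg (by norm_num : (1/2 : ℝ) - 1 < 0)]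
            nlinarith
      have B : 2 ^ (n + 1) * f x₀ ≤ f (u (n + 1)) := by
        refine @geom_le (f ∘ u) _ zero_le_two (n + 1) fun m hm => ?_
        exact (IH _ <| Nat.lt_add_one_iff.1 hm).2.le
      exact hu (n + 1) ⟨A, B⟩
  cases' forall_and.mp key with key₁ key₂
  have cauchy_u : CauchySeq u := by
    refine cauchySeq_of_le_geometric _ ε₀ one_half_lt_one fun n => ?_
    simpa only [one_div, inv_pow, div_eq_mul_inv, one_mul] using key₁ n
  obtain ⟨y, limy⟩ : ∃ y, Tendsto u atTop (𝓝 y) := CompleteSpace.complete cauchy_u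
  have lim_top : Tendsto (f ∘ u) atTop atTop := by
    let v n := (f ∘ u) (n + 1)
    suffices Tendsto v atTop atTop by rwa [tendsto_add_atTop_iff_nat] at this
    have hv₀ : 0 < v 0 := by
      calc
        0 ≤ 2 * f (u 0) := by specialize hnonneg x₀; positivity
        _ < f (u (0 + 1)) := key₂ 0
    apply tendsto_atTop_of_geom_le hv₀ one_lt_two
    exact fun n => (key₂ (n + 1)).le
  have lim : Tendsto (f ∘ u) atTop (𝓝 (f y)) := Tendsto.comp hf.continuousAt limy
  exact not_tendsto_atTop_of_tendsto_nhds lim lim_top
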